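/- For every variable j ∈ {1,…,d}, the global uniqueness Shapley value satisfies the bracketing inequality 𝓗({j})/d ≤ φ^{1:n}_j ≤ 𝓗({1,…,d}). -/

import Mathlib

open Finset

variable {n d : ℕ} {X : Fin d → Type} [∀ j, Fintype (X j)] [∀ j, DecidableEq (X j)]

/-- Number of subjects matching subject `t` on every variable in `u`. -/
def cohortN (x : Fin n → ∀ j, X j) (t : Fin n) (u : Finset (Fin d)) : ℕ :=
  (Finset.univ.filter fun i => ∀ j ∈ u, x i j = x t j).card

/-- Value function `val_t(u) = -log₂(N_t(u)/n)`. -/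
noncomputable def uVal (x : Fin n → ∀ j, X j) (t : Fin n) (u : Finset (Fin d)) : ℝ :=
  -Real.logb 2 ((cohortN x t u : ℝ) / n)

/-- Uniqueness Shapley value of variable `j` for subject `t`. -/
noncomputable def uShap (x : Fin n → ∀ j, X j) (t : Fin n) (j : Fin d) : ℝ :=
  (d : ℝ)⁻¹ * ∑ u ∈ ((Finset.univ : Finset (Fin d)).erase j).powerset,
    ((d - 1).choose u.card : ℝ)⁻¹ * (uVal x t (insert j u) - uVal x t u)

/-- Global uniqueness Shapley value. -/
noncomputable def uShapGlobal (x : Fin n → ∀ j, X j) (j : Fin d) : ℝ :=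
  (n : ℝ)⁻¹ * ∑ t, uShap x t j

/-- Marginal empirical probability of observing `z` on the variables in `u`. -/
noncomputable def margP (x : Fin n → ∀ j, X j) (u : Finset (Fin d))
    (z : ∀ j : u, X j.1) : ℝ :=
  ((Finset.univ.filter fun i : Fin n => ∀ j : u, x i j.1 = z j).card : ℝ) / n

/-- Empirical entropy of the variables in `u` (convention `0·log₂ 0 = 0` holds automatically). -/
noncomputable def emEnt (x : Fin n → ∀ j, X j) (u : Finset (Fin d)) : ℝ :=
  -∑ z : (∀ j : u, X j.1), margP x u z * Real.logb 2 (margP x u z)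

/- ### Auxiliary lemmas -/

lemma cohortN_pos (x : Fin n → ∀ j, X j) (t : Fin n) (u : Finset (Fin d)) :
    0 < cohortN x t u :=
  Finset.card_pos.2 ⟨t, by simp⟩

lemma cohortN_le (x : Fin n → ∀ j, X j) (t : Fin n) (u : Finset (Fin d)) :
    cohortN x t u ≤ n := by
  simpa [cohortN] using (Finset.card_filter_le (univ : Finset (Fin n))
    fun i => ∀ j ∈ u, x i j = x t j)

lemma cohortN_anti (x : Fin n → ∀ j, X j) (t : Fin n) {u v : Finset (Fin d)}
    (h : u ⊆ v) : cohortN x t v ≤ cohortN x t u := by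
  apply Finset.card_le_card
  intro i hi
  simp only [mem_filter, mem_univ, true_and] at hi ⊢
  exact fun jj hj => hi jj (h hj)

lemma uVal_nonneg (hn : 0 < n) (x : Fin n → ∀ j, X j) (t : Fin n) (u : Finset (Fin d)) :
    0 ≤ uVal x t u := by
  have hN := cohortN_pos x t u
  have hNn := cohortN_le x t u
  have h1 : ((cohortN x t u : ℝ) / n) ≤ 1 := by
    rw [div_le_one (by exact_mod_cast hn)]
    exact_mod_cast hNn
  have h0 : (0 : ℝ) ≤ (cohortN x t u : ℝ) / n := by positivity
  simpa [uVal] using Real.logb_nonpos (by norm_num) h0 h1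

lemma uVal_mono (hn : 0 < n) (x : Fin n → ∀ j, X j) (t : Fin n) {u v : Finset (Fin d)}
    (h : u ⊆ v) : uVal x t u ≤ uVal x t v := by
  unfold uVal
  have hvpos : (0 : ℝ) < (cohortN x t v : ℝ) / n := by
    have := cohortN_pos x t v
    positivity
  have hle : ((cohortN x t v : ℝ) / n) ≤ (cohortN x t u : ℝ) / n := by
    gcongr
    exact_mod_cast cohortN_anti x t h
  exact neg_le_neg (Real.logb_le_logb_of_le (by norm_num) hvpos hle)

lemma uVal_empty (hn : 0 < n) (x : Fin n → ∀ j, X j) (t : Fin n) :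
    uVal x t (∅ : Finset (Fin d)) = 0 := by
  have : cohortN x t (∅ : Finset (Fin d)) = n := by
    simp [cohortN]
  rw [uVal, this, div_self (by exact_mod_cast hn.ne' : (n : ℝ) ≠ 0)]
  simp

lemma sum_uVal (hn : 0 < n) (x : Fin n → ∀ j, X j) (u : Finset (Fin d)) :
    ∑ t, uVal x t u = n * emEnt x u := by
  have key : ∀ z : (∀ j : u, X j.1),
      ∑ t ∈ univ.filter (fun t : Fin n => (fun j : u => x t j.1) = z), uVal x t u
        = -((n : ℝ) * (margP x u z * Real.logb 2 (margP x u z))) := by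
    intro z
    have hcard : ((univ.filter fun i : Fin n => ∀ j : u, x i j.1 = z j).card : ℝ)
        = n * margP x u z := by
      unfold margP
      field_simp
    have hfilter : (univ.filter fun t : Fin n => (fun j : u => x t j.1) = z)
        = univ.filter fun i : Fin n => ∀ j : u, x i j.1 = z j := by
      apply Finset.filter_congr
      intro i _
      simp [funext_iff]
    rw [hfilter]
    have huval : ∀ t ∈ univ.filter (fun i : Fin n => ∀ j : u, x i j.1 = z j),
        uVal x t u = -Real.logb 2 (margP x u z) := by
      intro t ht
      simp only [mem_filter, mem_univ, true_and] at ht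
      have hco : cohortN x t u
          = (univ.filter fun i : Fin n => ∀ j : u, x i j.1 = z j).card := by
        unfold cohortN
        congr 1
        apply Finset.filter_congr
        intro i _
        constructor
        · intro h jj
          rw [h jj.1 jj.2]; exact ht jj
        · intro h jj hjj
          rw [h ⟨jj, hjj⟩, ht ⟨jj, hjj⟩]
      have hcoR : (cohortN x t u : ℝ) = n * margP x u z := by
        rw [← hcard]; exact_mod_cast hco
      rw [uVal, hcoR, mul_div_cancel_left₀ _ (by exact_mod_cast hn.ne' : (n : ℝ) ≠ 0)]
    rw [Finset.sum_congr rfl huval, Finset.sum_const, nsmul_eq_mul, hcard]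
    ring
  calc ∑ t, uVal x t u
      = ∑ z : (∀ j : u, X j.1),
          ∑ t ∈ univ.filter (fun t : Fin n => (fun j : u => x t j.1) = z), uVal x t u :=
        (Finset.sum_fiberwise _ _ _).symm
    _ = ∑ z : (∀ j : u, X j.1),
          -((n : ℝ) * (margP x u z * Real.logb 2 (margP x u z))) :=
        Finset.sum_congr rfl fun z _ => key z
    _ = n * emEnt x u := by
        rw [emEnt, mul_neg, Finset.mul_sum, ← Finset.sum_neg_distrib]

lemma choose_inv_sum (hd : 1 ≤ d) (j : Fin d) :
    ∑ u ∈ ((univ : Finset (Fin d)).erase j).powerset,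
      ((d - 1).choose u.card : ℝ)⁻¹ = d := by
  have hcard : ((univ : Finset (Fin d)).erase j).card = d - 1 := by
    rw [card_erase_of_mem (mem_univ j), card_univ, Fintype.card_fin]
  rw [Finset.sum_powerset, hcard]
  have hone : ∀ k ∈ range (d - 1 + 1),
      ∑ u ∈ powersetCard k ((univ : Finset (Fin d)).erase j),
        ((d - 1).choose u.card : ℝ)⁻¹ = 1 := by
    intro k hk
    rw [mem_range, Nat.lt_succ_iff] at hk
    have h1 : ∀ u ∈ powersetCard k ((univ : Finset (Fin d)).erase j),
        ((d - 1).choose u.card : ℝ)⁻¹ = ((d - 1).choose k : ℝ)⁻¹ := by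
      intro u hu
      rw [(Finset.mem_powersetCard.1 hu).2]
    rw [Finset.sum_congr rfl h1, Finset.sum_const, Finset.card_powersetCard, hcard,
      nsmul_eq_mul, mul_inv_cancel₀]
    exact_mod_cast (Nat.choose_pos hk).ne'
  rw [Finset.sum_congr rfl hone, Finset.sum_const, card_range, nsmul_eq_mul, mul_one]
  have : d - 1 + 1 = d := by omega
  exact_mod_cast congrArg (Nat.cast : ℕ → ℝ) this

/-- the bracketing inequality `𝓗({j})/d ≤ φ^{1:n}_j ≤ 𝓗({1,…,d})`. -/
theorem globalUniquenessShapley_bracketing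
    (n d : ℕ) (hn : 1 ≤ n) (hd : 1 ≤ d)
    (X : Fin d → Type) [∀ j, Fintype (X j)] [∀ j, DecidableEq (X j)]
    (x : Fin n → ∀ j, X j) (j : Fin d) :
    emEnt x {j} / d ≤ uShapGlobal x j ∧ uShapGlobal x j ≤ emEnt x Finset.univ := by
  have hn0 : 0 < n := hn
  have hnR : (0 : ℝ) < n := by exact_mod_cast hn
  have hdR : (0 : ℝ) < d := by exact_mod_cast hd
  set P := ((univ : Finset (Fin d)).erase j).powerset with hP
  set S : Finset (Fin d) → ℝ := fun u => ∑ t, (uVal x t (insert j u) - uVal x t u) with hS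
  have hrep : uShapGlobal x j
      = (n : ℝ)⁻¹ * ((d : ℝ)⁻¹ * ∑ u ∈ P, ((d - 1).choose u.card : ℝ)⁻¹ * S u) := by
    unfold uShapGlobal uShap
    congr 1
    rw [← Finset.mul_sum]
    congr 1
    rw [Finset.sum_comm]
    exact Finset.sum_congr rfl fun u _ => (Finset.mul_sum _ _ _).symm
  have hSnonneg : ∀ u ∈ P, 0 ≤ S u := fun u _ =>
    Finset.sum_nonneg fun t _ => sub_nonneg.2 (uVal_mono hn0 x t (Finset.subset_insert j u))
  have hcnonneg : ∀ u : Finset (Fin d), (0 : ℝ) ≤ ((d - 1).choose u.card : ℝ)⁻¹ := by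
    intro u; positivity
  constructor
  · -- lower bound
    have hSempty : S ∅ = n * emEnt x {j} := by
      simp only [hS]
      rw [Finset.sum_sub_distrib]
      have h1 : ∑ t, uVal x t (insert j (∅ : Finset (Fin d))) = n * emEnt x {j} := by
        rw [show insert j (∅ : Finset (Fin d)) = {j} from rfl]
        exact sum_uVal hn0 x {j}
      have h2 : ∑ t : Fin n, uVal x t (∅ : Finset (Fin d)) = 0 :=
        Finset.sum_eq_zero fun t _ => uVal_empty hn0 x t
      rw [h1, h2, sub_zero]
    have hmem : (∅ : Finset (Fin d)) ∈ P := Finset.empty_mem_powerset _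
    have hlow : (n : ℝ) * emEnt x {j}
        ≤ ∑ u ∈ P, ((d - 1).choose u.card : ℝ)⁻¹ * S u := by
      have := Finset.single_le_sum
        (f := fun u => ((d - 1).choose u.card : ℝ)⁻¹ * S u)
        (fun u hu => mul_nonneg (hcnonneg u) (hSnonneg u hu)) hmem
      simpa [hSempty] using this
    rw [hrep]
    have heq : emEnt x {j} / d = (n : ℝ)⁻¹ * ((d : ℝ)⁻¹ * ((n : ℝ) * emEnt x {j})) := by
      field_simp
    rw [heq]
    apply mul_le_mul_of_nonneg_left _ (by positivity)
    exact mul_le_mul_of_nonneg_left hlow (by positivity)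
  · -- upper bound
    have hSle : ∀ u ∈ P, S u ≤ n * emEnt x univ := by
      intro u _
      have h1 : S u ≤ ∑ t, uVal x t (univ : Finset (Fin d)) := by
        apply Finset.sum_le_sum
        intro t _
        have := uVal_nonneg hn0 x t u
        have h2 := uVal_mono hn0 x t (Finset.subset_univ (insert j u))
        linarith
      rw [sum_uVal hn0 x univ] at h1
      exact h1
    have hup : ∑ u ∈ P, ((d - 1).choose u.card : ℝ)⁻¹ * S u
        ≤ (d : ℝ) * ((n : ℝ) * emEnt x univ) := by
      calc ∑ u ∈ P, ((d - 1).choose u.card : ℝ)⁻¹ * S u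
          ≤ ∑ u ∈ P, ((d - 1).choose u.card : ℝ)⁻¹ * ((n : ℝ) * emEnt x univ) :=
            Finset.sum_le_sum fun u hu =>
              mul_le_mul_of_nonneg_left (hSle u hu) (hcnonneg u)
        _ = (d : ℝ) * ((n : ℝ) * emEnt x univ) := by
            rw [← Finset.sum_mul, choose_inv_sum hd j]
    rw [hrep]
    calc (n : ℝ)⁻¹ * ((d : ℝ)⁻¹ * ∑ u ∈ P, ((d - 1).choose u.card : ℝ)⁻¹ * S u)
        ≤ (n : ℝ)⁻¹ * ((d : ℝ)⁻¹ * ((d : ℝ) * ((n : ℝ) * emEnt x univ))) := by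
          apply mul_le_mul_of_nonneg_left _ (by positivity)
          exact mul_le_mul_of_nonneg_left hup (by positivity)
      _ = emEnt x univ := by field_simp
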